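/- Let s ≥ 1, let δ₁, …, δ_s and k be positive rationals (or integers with entries in ℚ), set d = δ₁ + ⋯ + δ_s, and let A be the s×s matrix with A_{ii} = −δ_i(d − δ_i + k)/k and A_{ij} = δ_iδ_j/k for i ≠ j. Then det(−A) = δ₁ ⋯ δ_s · ((d+k)/k)^{s−1}. -/

import Mathlib

open Finset in
/-- The linear-algebra core of Corollary (cor:ly): let δ₁, …, δ_s and k be positive
rationals, d = δ₁ + ⋯ + δ_s, and A the s×s matrix with A_{ii} = −δᵢ(d − δᵢ + k)/k and
A_{ij} = δᵢδⱼ/k for i ≠ j.  Then det(−A) = δ₁ ⋯ δ_s · ((d+k)/k)^{s−1}. -/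
theorem det_leYomdin_matrix (s : ℕ) (hs : 0 < s) (δ : Fin s → ℚ) (k : ℚ)
    (hδ : ∀ i, 0 < δ i) (hk : 0 < k) :
    (-(Matrix.of fun i j : Fin s =>
        if i = j then -(δ i * ((∑ l, δ l) - δ i + k)) / k
        else δ i * δ j / k)).det =
      (∏ i, δ i) * (((∑ l, δ l) + k) / k) ^ (s - 1) := by
  have hne : (Finset.univ : Finset (Fin s)).Nonempty := ⟨⟨0, hs⟩, Finset.mem_univ _⟩
  set d : ℚ := ∑ l, δ l with hd
  have hk' : k ≠ 0 := hk.ne'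
  have hdpos : 0 < d := Finset.sum_pos (fun i _ => hδ i) hne
  have hdk : d + k ≠ 0 := by positivity
  set a : ℚ := (d + k) / k with ha
  have haa : a ≠ 0 := div_ne_zero hdk hk'
  have hB : (-(Matrix.of fun i j : Fin s =>
        if i = j then -(δ i * ((∑ l, δ l) - δ i + k)) / k
        else δ i * δ j / k)) =
      Matrix.diagonal δ *
        (a • (1 + Matrix.replicateCol Unit (fun _ => (-1)/a) * Matrix.replicateRow Unit (fun j => δ j / k))) := by
    ext i j
    rw [Matrix.diagonal_mul]
    simp only [Matrix.smul_apply, Matrix.add_apply, Matrix.one_apply, Matrix.of_apply,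
      Matrix.neg_apply, Matrix.mul_apply, Finset.univ_unique, Finset.sum_singleton,
      Matrix.replicateCol_apply, Matrix.replicateRow_apply, smul_eq_mul]
    by_cases h : i = j
    · subst h
      simp only [if_pos rfl]
      rw [ha]
      field_simp
      simp only [if_true, ← hd]
      field_simp
      ring
    · simp only [if_neg h]
      rw [ha]
      field_simp
      ring
  rw [hB, Matrix.det_mul, Matrix.det_diagonal, Matrix.det_smul,
    Matrix.det_one_add_replicateCol_mul_replicateRow]
  have hdot : dotProduct (fun j => δ j / k) (fun _ : Fin s => (-1)/a) = -d / (d + k) := by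
    have h2 : ∀ x : Fin s, δ x / k * ((-1)/a) = δ x * (-(d+k)⁻¹) := by
      intro x; rw [ha]; field_simp
    simp only [dotProduct, h2, ← Finset.sum_mul, ← hd]
    field_simp
  rw [hdot, Fintype.card_fin]
  have h1 : (1 : ℚ) + -d / (d + k) = k / (d + k) := by field_simp; ring
  rw [h1]
  obtain ⟨t, rfl⟩ : ∃ t, s = t + 1 := ⟨s - 1, (Nat.succ_pred_eq_of_pos hs).symm⟩
  rw [pow_succ]
  have : a * (k / (d + k)) = 1 := by rw [ha]; field_simp
  rw [mul_assoc, this, mul_one, Nat.add_sub_cancel]
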